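/- Let Λ ∈ L^1(ℝ) ∩ L^∞(ℝ) have compact support, and let ν ∈ M(𝕋) be a continuous measure (ν{y} = 0 for all y). If μ ∈ M(ℝ) satisfies μ̂(ξ) = Σ_{n∈ℤ} ν̂(n) Λ(ξ−n), then μ is a continuous measure: μ{y} = 0 for every y ∈ ℝ. -/

import Mathlib

open MeasureTheory Complex Real FourierTransform Filter Topology
open scoped ENNReal NNReal


noncomputable section


lemma my_norm_exp' (a b : ℝ) : ‖Complex.exp (2 * π * I * a * b)‖ = 1 := by
  rw [show (2 * (π:ℂ) * I * a * b) = ((2 * π * a * b : ℝ) : ℂ) * I by push_cast; ring]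
  exact Complex.norm_exp_ofReal_mul_I _

lemma my_norm_fourier (n : ℤ) (x : AddCircle (1:ℝ)) : ‖(fourier n) x‖ = 1 := by
  rw [fourier_apply]
  exact Circle.norm_coe _

lemma my_dirichlet (z : ℂ) (hz : ‖z‖ = 1) (h1 : z ≠ 1) (k : ℕ) :
    ‖∑ n ∈ Finset.Icc (-(k:ℤ)) (k:ℤ), z ^ n‖ ≤ 2 / ‖z - 1‖ := by
  have hz0 : z ≠ 0 := by intro h; simp [h] at hz
  have hsum : ∑ n ∈ Finset.Icc (-(k:ℤ)) (k:ℤ), z ^ n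
      = z ^ (-(k:ℤ)) * ∑ j ∈ Finset.range (2*k+1), z ^ j := by
    rw [Finset.mul_sum]
    refine Finset.sum_nbij' (fun n => (n + k).toNat) (fun j => (j:ℤ) - k) ?_ ?_ ?_ ?_ ?_
    · intro n hn; simp only [Finset.mem_Icc] at hn; simp only [Finset.mem_range]; omega
    · intro j hj; simp only [Finset.mem_range] at hj; simp only [Finset.mem_Icc]; omega
    · intro n hn; simp only [Finset.mem_Icc] at hn; omega
    · intro j hj; simp only [Finset.mem_range] at hj; omega
    · intro n hn
      simp only [Finset.mem_Icc] at hn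
      rw [← zpow_natCast, ← zpow_add₀ hz0]
      congr 1
      omega
  have hne : 0 < ‖z - 1‖ := by
    rw [norm_pos_iff]; exact sub_ne_zero.mpr h1
  rw [hsum, geom_sum_eq h1, norm_mul, norm_zpow, hz, one_zpow, one_mul, norm_div]
  gcongr
  calc ‖z ^ (2*k+1) - 1‖ ≤ ‖z ^ (2*k+1)‖ + ‖(1:ℂ)‖ := norm_sub_le _ _
    _ = 2 := by rw [norm_pow, hz]; norm_num

lemma my_fourier_kernel (n : ℤ) (y : ℝ) (t : AddCircle (1:ℝ)) :
    (fourier (-n)) t * Complex.exp (2 * π * I * n * y)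
      = (fourier n) ((y : AddCircle (1:ℝ)) - t) := by
  induction t using QuotientAddGroup.induction_on with
  | H r =>
    rw [show ((y : AddCircle (1:ℝ)) - (r : ℝ)) = ((y - r : ℝ) : AddCircle (1:ℝ))
      from (QuotientAddGroup.mk_sub _ y r).symm]
    rw [fourier_coe_apply, fourier_coe_apply, ← Complex.exp_add]
    congr 1
    push_cast
    ring

lemma my_fourier_zpow (n : ℤ) (r : ℝ) :
    (fourier n) ((r : ℝ) : AddCircle (1:ℝ)) = Complex.exp (2 * π * I * r) ^ n := by
  rw [fourier_coe_apply, ← Complex.exp_int_mul]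
  congr 1
  push_cast
  ring

lemma my_exp_ne_one (r : ℝ) (hr : ((r : ℝ) : AddCircle (1:ℝ)) ≠ 0) :
    Complex.exp (2 * π * I * r) ≠ 1 := by
  intro h
  rw [Complex.exp_eq_one_iff] at h
  obtain ⟨m, hm⟩ := h
  apply hr
  rw [AddCircle.coe_eq_zero_iff]
  refine ⟨m, ?_⟩
  have h2 : (2 * (π:ℂ) * I) ≠ 0 := by
    refine mul_ne_zero (mul_ne_zero two_ne_zero ?_) I_ne_zero
    exact_mod_cast ofReal_ne_zero.mpr Real.pi_ne_zero
  have hrm : (r : ℂ) = (m : ℂ) := by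
    apply mul_left_cancel₀ h2
    rw [show (2 * (π:ℂ) * I) * r = 2 * π * I * r by ring, hm]
    ring
  have : r = (m : ℝ) := by exact_mod_cast hrm
  simp [this]

lemma my_norm_exp2 (a : ℝ) : ‖Complex.exp (2 * π * I * a)‖ = 1 := by
  rw [show (2 * (π:ℂ) * I * a) = 2 * π * I * (a:ℝ) * ((1:ℝ):ℂ) by push_cast; ring]
  exact my_norm_exp' a 1


lemma my_card_Icc (k : ℕ) : ((Finset.Icc (-(k:ℤ)) (k:ℤ)).card : ℝ) = 2*(k:ℝ)+1 := by
  rw [Int.card_Icc]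
  rw [show ((k:ℤ) + 1 - (-(k:ℤ))) = ((2*k+1 : ℕ) : ℤ) by push_cast; ring]
  rw [Int.toNat_natCast]
  push_cast
  ring

lemma my_two_k_tendsto : Tendsto (fun k : ℕ => (2*(k:ℝ)+1)) atTop atTop := by
  apply tendsto_atTop_add_const_right
  exact (tendsto_natCast_atTop_atTop (R := ℝ)).const_mul_atTop two_pos

lemma my_circle_avg (ν : Measure (AddCircle (1:ℝ))) [IsFiniteMeasure ν] (y : ℝ)
    (hν : ν {((y : ℝ) : AddCircle (1:ℝ))} = 0) :
    Tendsto (fun k : ℕ => (2*(k:ℝ)+1)⁻¹ • ∑ n ∈ Finset.Icc (-(k:ℤ)) (k:ℤ),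
      (∫ t, (fourier (-n)) t ∂ν) * Complex.exp (2 * π * I * n * y)) atTop (𝓝 0) := by
  set y0 : AddCircle (1:ℝ) := ((y : ℝ) : AddCircle (1:ℝ)) with hy0
  have hcont : ∀ m : ℤ, Continuous (fun t : AddCircle (1:ℝ) => (fourier m) (y0 - t)) :=
    fun m => (fourier m).continuous.comp (by fun_prop)
  have hint : ∀ m : ℤ, Integrable (fun t => (fourier m) (y0 - t)) ν := by
    intro m
    refine (integrable_const (1:ℝ)).mono' (hcont m).aestronglyMeasurable ?_
    filter_upwards with t
    rw [my_norm_fourier]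
  have hT : ∀ k : ℕ, ∑ n ∈ Finset.Icc (-(k:ℤ)) (k:ℤ),
      (∫ t, (fourier (-n)) t ∂ν) * Complex.exp (2 * π * I * n * y)
      = ∫ t, (∑ n ∈ Finset.Icc (-(k:ℤ)) (k:ℤ), (fourier n) (y0 - t)) ∂ν := by
    intro k
    rw [integral_finset_sum _ (fun n _ => hint n)]
    refine Finset.sum_congr rfl fun n _ => ?_
    rw [← integral_mul_const]
    exact integral_congr_ae (Eventually.of_forall fun t => my_fourier_kernel n y t)
  have key : Tendsto (fun k : ℕ => ∫ t, (2*(k:ℝ)+1)⁻¹ •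
      (∑ n ∈ Finset.Icc (-(k:ℤ)) (k:ℤ), (fourier n) (y0 - t)) ∂ν)
      atTop (𝓝 (∫ _t : AddCircle (1:ℝ), (0:ℂ) ∂ν)) := by
    apply tendsto_integral_of_dominated_convergence (bound := fun _ => (1:ℝ))
    · intro k
      exact ((continuous_finset_sum _ fun n _ => hcont n).const_smul (2*(k:ℝ)+1)⁻¹).aestronglyMeasurable
    · exact integrable_const 1
    · intro k
      filter_upwards with t
      rw [norm_smul, Real.norm_eq_abs, _root_.abs_of_nonneg (by positivity)]
      have h1 : ‖∑ n ∈ Finset.Icc (-(k:ℤ)) (k:ℤ), (fourier n) (y0 - t)‖ ≤ 2*(k:ℝ)+1 := by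
        calc ‖∑ n ∈ Finset.Icc (-(k:ℤ)) (k:ℤ), (fourier n) (y0 - t)‖
            ≤ ∑ n ∈ Finset.Icc (-(k:ℤ)) (k:ℤ), ‖(fourier n) (y0 - t)‖ := norm_sum_le _ _
          _ = ((Finset.Icc (-(k:ℤ)) (k:ℤ)).card : ℝ) := by
              rw [Finset.sum_congr rfl fun n _ => my_norm_fourier n (y0 - t)]
              simp
          _ = 2*(k:ℝ)+1 := my_card_Icc k
      calc (2*(k:ℝ)+1)⁻¹ * ‖∑ n ∈ Finset.Icc (-(k:ℤ)) (k:ℤ), (fourier n) (y0 - t)‖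
          ≤ (2*(k:ℝ)+1)⁻¹ * (2*(k:ℝ)+1) := by gcongr
        _ = 1 := inv_mul_cancel₀ (by positivity)
    · have hae : ∀ᵐ t ∂ν, t ≠ y0 := by
        rw [ae_iff]
        simpa using hν
      filter_upwards [hae] with t ht
      obtain ⟨r, hr⟩ := QuotientAddGroup.mk_surjective (y0 - t)
      have hs0 : y0 - t ≠ 0 := sub_ne_zero.mpr (Ne.symm ht)
      set z : ℂ := Complex.exp (2 * π * I * r) with hz
      have hz1 : ‖z‖ = 1 := my_norm_exp2 r
      have hzne : z ≠ 1 := my_exp_ne_one r (by rw [hr]; exact hs0)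
      have hD : ∀ k : ℕ, ‖∑ n ∈ Finset.Icc (-(k:ℤ)) (k:ℤ), (fourier n) (y0 - t)‖ ≤ 2/‖z-1‖ := by
        intro k
        have hfz : ∀ n : ℤ, (fourier n) (y0 - t) = z ^ n := by
          intro n; rw [← hr, my_fourier_zpow]
        rw [Finset.sum_congr rfl fun n _ => hfz n]
        exact my_dirichlet z hz1 hzne k
      apply squeeze_zero_norm (a := fun k : ℕ => (2/‖z-1‖) * (2*(k:ℝ)+1)⁻¹)
      · intro k
        rw [norm_smul, Real.norm_eq_abs, _root_.abs_of_nonneg (by positivity),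
          mul_comm ((2:ℝ)/‖z-1‖) _]
        gcongr
        exact hD k
      · simpa using (my_two_k_tendsto.inv_tendsto_atTop).const_mul (2/‖z-1‖)
  rw [show (∫ _t : AddCircle (1:ℝ), (0:ℂ) ∂ν) = 0 by simp] at key
  refine key.congr fun k => ?_
  rw [integral_smul, ← hT k]
set_option maxHeartbeats 1000000 in
/-- Let `Λ ∈ L¹(ℝ) ∩ L^∞(ℝ)` have compact support, and let `ν ∈ M(𝕋)` be a continuous
measure.  If `μ ∈ M(ℝ)` satisfies `μ̂(ξ) = Σ_n ν̂(n) Λ(ξ-n)`, then `μ` is continuous: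
`μ{y} = 0` for every `y`. -/
theorem stmt9 (Λ : ℝ → ℂ) (hΛ1 : Integrable Λ volume) (hΛ2 : MemLp Λ ⊤ volume)
    (hsupp : HasCompactSupport Λ)
    (ν : Measure (AddCircle (1 : ℝ))) [IsFiniteMeasure ν]
    (hν : ∀ y : AddCircle (1 : ℝ), ν {y} = 0)
    (μ : Measure ℝ) [IsFiniteMeasure μ]
    (hμ : ∀ ξ : ℝ, (∫ x : ℝ, Complex.exp (-(2 * π * I * (ξ : ℂ) * (x : ℂ))) ∂μ) =
      ∑' n : ℤ, (∫ t : AddCircle (1 : ℝ), fourier (-n) t ∂ν) * Λ (ξ - (n : ℝ))) :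
    ∀ y : ℝ, μ {y} = 0 := by
  intro y
  classical
  obtain ⟨N, hNsupp⟩ : ∃ N : ℕ, ∀ u : ℝ, (N:ℝ) ≤ |u| → Λ u = 0 := by
    obtain ⟨R, hR⟩ := hsupp.isBounded.subset_closedBall 0
    refine ⟨⌈R⌉₊ + 1, fun u hu => ?_⟩
    apply image_eq_zero_of_notMem_tsupport
    intro hmem
    have h1 : |u| ≤ R := by simpa [Real.dist_eq] using hR hmem
    have h2 : R ≤ (⌈R⌉₊ : ℝ) := Nat.le_ceil R
    have h3 : ((⌈R⌉₊ + 1 : ℕ) : ℝ) = (⌈R⌉₊:ℝ) + 1 := by push_cast; ring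
    rw [h3] at hu
    linarith
  set lam : ℕ → ℝ := fun k => (k:ℝ) + (N:ℝ) + 1 with hlam
  have hlampos : ∀ k, 0 < lam k := fun k => by positivity
  have hlamle : ∀ k, -(lam k) ≤ lam k := fun k => by nlinarith [hlampos k]
  have hfin : ∀ k : ℕ, IsFiniteMeasure (volume.restrict (Set.Ioc (-(lam k)) (lam k))) :=
    fun k => ⟨by rw [Measure.restrict_apply_univ]; exact measure_Ioc_lt_top⟩
  set fh : ℤ → ℂ := fun n => ∫ t, (fourier (-n)) t ∂ν with hfh
  set Cν : ℝ := (ν Set.univ).toReal with hCν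
  have hCν0 : 0 ≤ Cν := ENNReal.toReal_nonneg
  have hfhb : ∀ n, ‖fh n‖ ≤ Cν := by
    intro n
    calc ‖fh n‖ ≤ ∫ t, ‖(fourier (-n)) t‖ ∂ν := norm_integral_le_integral_norm _
      _ = ∫ _t, (1:ℝ) ∂ν := integral_congr_ae (.of_forall fun t => my_norm_fourier _ _)
      _ = Cν := by simp [hCν, Measure.real]
  set CΛ : ℝ := ∫ u, ‖Λ u‖ with hCΛ
  have hCΛ0 : 0 ≤ CΛ := integral_nonneg fun u => norm_nonneg _
  set c0 : ℂ := ∫ u : ℝ, Λ u * Complex.exp (2*π*I*u*y) with hc0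
  have hΛshift : ∀ n : ℤ, Integrable (fun ξ : ℝ => Λ (ξ - (n:ℝ))) volume :=
    fun n => hΛ1.comp_sub_right _
  have hmulint : ∀ n : ℤ,
      Integrable (fun ξ : ℝ => Λ (ξ - (n:ℝ)) * Complex.exp (2*π*I*ξ*y)) volume := by
    intro n
    refine ((hΛshift n).norm).mono' ?_ ?_
    · exact (hΛshift n).aestronglyMeasurable.mul
        (Continuous.aestronglyMeasurable (by fun_prop))
    · filter_upwards with ξ
      rw [norm_mul, my_norm_exp', mul_one]
  set J : ℕ → ℤ → ℂ := fun k n =>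
    ∫ ξ in Set.Ioc (-(lam k)) (lam k), Λ (ξ - (n:ℝ)) * Complex.exp (2*π*I*ξ*y) with hJ
  set S : ℕ → Finset ℤ := fun k => Finset.Icc (-((k:ℤ)+2*N+1)) ((k:ℤ)+2*N+1) with hS
  have hsub : ∀ k : ℕ, Finset.Icc (-(k:ℤ)) (k:ℤ) ⊆ S k := by
    intro k n hn
    simp only [hS, Finset.mem_Icc] at hn ⊢
    omega
  have hμ' : ∀ ξ : ℝ, (∫ x : ℝ, Complex.exp (-(2 * π * I * (ξ:ℂ) * (x:ℂ))) ∂μ)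
      = ∑' n : ℤ, fh n * Λ (ξ - (n:ℝ)) := by
    intro ξ
    rw [hμ ξ]
  -- Step A: interchange of sum and integral
  have hSsum : ∀ k : ℕ, (∫ ξ in Set.Ioc (-(lam k)) (lam k),
      (∑' n : ℤ, fh n * Λ (ξ - (n:ℝ))) * Complex.exp (2*π*I*ξ*y))
      = ∑ n ∈ S k, fh n * J k n := by
    intro k
    have hcong : ∀ ξ ∈ Set.Ioc (-(lam k)) (lam k),
        (∑' n : ℤ, fh n * Λ (ξ - (n:ℝ))) * Complex.exp (2*π*I*ξ*y)
        = ∑ n ∈ S k, fh n * (Λ (ξ - (n:ℝ)) * Complex.exp (2*π*I*ξ*y)) := by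
      intro ξ hξ
      rw [tsum_eq_sum (s := S k) ?_, Finset.sum_mul]
      · exact Finset.sum_congr rfl fun n _ => mul_assoc _ _ _
      · intro n hn
        have hz : Λ (ξ - (n:ℝ)) = 0 := by
          apply hNsupp
          have h1 : |ξ| ≤ lam k := by
            rw [abs_le]; exact ⟨le_of_lt hξ.1, hξ.2⟩
          have h2 : (k:ℝ) + 2*(N:ℝ) + 2 ≤ |(n:ℝ)| := by
            simp only [hS, Finset.mem_Icc, not_and_or, not_le] at hn
            rcases hn with h | h
            · refine le_abs.mpr (Or.inr ?_)
              have h' : (n:ℝ) ≤ -((k:ℝ) + 2*(N:ℝ) + 2) := by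
                exact_mod_cast (show (n:ℤ) ≤ -((k:ℤ) + 2*N + 2) by omega)
              linarith
            · refine le_abs.mpr (Or.inl ?_)
              exact_mod_cast (show ((k:ℤ) + 2*N + 2 : ℤ) ≤ n by omega)
          simp only [hlam] at h1
          calc (N:ℝ) ≤ |(n:ℝ)| - |ξ| := by linarith
            _ ≤ |(n:ℝ) - ξ| := abs_sub_abs_le_abs_sub _ _
            _ = |ξ - (n:ℝ)| := abs_sub_comm _ _
        simp [hz]
    calc (∫ ξ in Set.Ioc (-(lam k)) (lam k),
        (∑' n : ℤ, fh n * Λ (ξ - (n:ℝ))) * Complex.exp (2*π*I*ξ*y))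
        = ∫ ξ in Set.Ioc (-(lam k)) (lam k),
          ∑ n ∈ S k, fh n * (Λ (ξ - (n:ℝ)) * Complex.exp (2*π*I*ξ*y)) :=
        setIntegral_congr_fun measurableSet_Ioc hcong
      _ = ∑ n ∈ S k, ∫ ξ in Set.Ioc (-(lam k)) (lam k),
          fh n * (Λ (ξ - (n:ℝ)) * Complex.exp (2*π*I*ξ*y)) :=
        integral_finset_sum _ fun n _ => ((hmulint n).const_mul (fh n)).restrict
      _ = ∑ n ∈ S k, fh n * J k n :=
        Finset.sum_congr rfl fun n _ => integral_const_mul _ _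
  -- Step B: full-window values
  have hJfull : ∀ (k:ℕ), ∀ n ∈ Finset.Icc (-(k:ℤ)) (k:ℤ),
      J k n = Complex.exp (2*π*I*(n:ℝ)*y) * c0 := by
    intro k n hn
    have hnk : |(n:ℝ)| ≤ (k:ℝ) := by
      simp only [Finset.mem_Icc] at hn
      rw [abs_le]
      constructor
      · exact_mod_cast hn.1
      · exact_mod_cast hn.2
    have key : ∀ u : ℝ, (Set.Ioc (-(lam k)) (lam k)).indicator
        (fun ξ => Λ (ξ - (n:ℝ)) * Complex.exp (2*π*I*ξ*y)) (u + (n:ℝ))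
        = Complex.exp (2*π*I*(n:ℝ)*y) * (Λ u * Complex.exp (2*π*I*u*y)) := by
      intro u
      by_cases hu : Λ u = 0
      · simp [Set.indicator_apply, hu]
      · have hN' : |u| < (N:ℝ) := by
          by_contra h
          exact hu (hNsupp u (le_of_not_gt h))
        have h1 := abs_lt.mp hN'
        have h2 := abs_le.mp hnk
        have hun : u + (n:ℝ) ∈ Set.Ioc (-(lam k)) (lam k) := by
          simp only [hlam, Set.mem_Ioc]
          constructor
          · linarith
          · linarith
        rw [Set.indicator_of_mem hun, show u + (n:ℝ) - n = u by ring]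
        have he : Complex.exp (2*π*I*((u + (n:ℝ) : ℝ):ℂ)*y)
            = Complex.exp (2*π*I*(n:ℝ)*y) * Complex.exp (2*π*I*(u:ℝ)*y) := by
          rw [← Complex.exp_add]
          congr 1
          push_cast
          ring
        rw [he]
        ring
    calc J k n = ∫ u : ℝ, (Set.Ioc (-(lam k)) (lam k)).indicator
          (fun ξ => Λ (ξ - (n:ℝ)) * Complex.exp (2*π*I*ξ*y)) u :=
        (integral_indicator measurableSet_Ioc).symm
      _ = ∫ u : ℝ, (Set.Ioc (-(lam k)) (lam k)).indicator
          (fun ξ => Λ (ξ - (n:ℝ)) * Complex.exp (2*π*I*ξ*y)) (u + (n:ℝ)) :=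
        (integral_add_right_eq_self _ _).symm
      _ = ∫ u : ℝ, Complex.exp (2*π*I*(n:ℝ)*y) * (Λ u * Complex.exp (2*π*I*u*y)) :=
        integral_congr_ae (.of_forall key)
      _ = Complex.exp (2*π*I*(n:ℝ)*y) * c0 := integral_const_mul _ _
  -- Step C: uniform bound on J
  have hJb : ∀ (k:ℕ) (n:ℤ), ‖J k n‖ ≤ CΛ := by
    intro k n
    have h1 : ‖J k n‖ ≤ ∫ ξ in Set.Ioc (-(lam k)) (lam k),
        ‖Λ (ξ - (n:ℝ)) * Complex.exp (2*π*I*ξ*y)‖ := norm_integral_le_integral_norm _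
    have h2 : (∫ ξ in Set.Ioc (-(lam k)) (lam k),
        ‖Λ (ξ - (n:ℝ)) * Complex.exp (2*π*I*ξ*y)‖)
        = ∫ ξ in Set.Ioc (-(lam k)) (lam k), ‖Λ (ξ - (n:ℝ))‖ :=
      setIntegral_congr_fun measurableSet_Ioc fun ξ _ => by
        rw [norm_mul, my_norm_exp', mul_one]
    have h3 : (∫ ξ in Set.Ioc (-(lam k)) (lam k), ‖Λ (ξ - (n:ℝ))‖)
        ≤ ∫ ξ : ℝ, ‖Λ (ξ - (n:ℝ))‖ :=
      setIntegral_le_integral (hΛshift n).norm (.of_forall fun ξ => norm_nonneg _)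
    have h4 : (∫ ξ : ℝ, ‖Λ (ξ - (n:ℝ))‖) = CΛ :=
      integral_sub_right_eq_self (fun u => ‖Λ u‖) _
    linarith
  set T : ℕ → ℂ := fun k => ∑ n ∈ Finset.Icc (-(k:ℤ)) (k:ℤ),
      fh n * Complex.exp (2*π*I*(n:ℝ)*y) with hTdef
  set A : ℕ → ℂ := fun k => (2*lam k)⁻¹ • ∫ ξ in Set.Ioc (-(lam k)) (lam k),
      (∫ x : ℝ, Complex.exp (-(2 * π * I * (ξ:ℂ) * (x:ℂ))) ∂μ) * Complex.exp (2*π*I*ξ*y)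
    with hA
  have hA2 : ∀ k, A k = (2*lam k)⁻¹ •
      ((∑ n ∈ S k \ Finset.Icc (-(k:ℤ)) (k:ℤ), fh n * J k n) + c0 * T k) := by
    intro k
    simp only [hA]
    congr 1
    calc (∫ ξ in Set.Ioc (-(lam k)) (lam k),
        (∫ x : ℝ, Complex.exp (-(2 * π * I * (ξ:ℂ) * (x:ℂ))) ∂μ) * Complex.exp (2*π*I*ξ*y))
        = ∫ ξ in Set.Ioc (-(lam k)) (lam k),
          (∑' n : ℤ, fh n * Λ (ξ - (n:ℝ))) * Complex.exp (2*π*I*ξ*y) := by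
            simp only [hμ']
      _ = ∑ n ∈ S k, fh n * J k n := hSsum k
      _ = (∑ n ∈ S k \ Finset.Icc (-(k:ℤ)) (k:ℤ), fh n * J k n)
          + ∑ n ∈ Finset.Icc (-(k:ℤ)) (k:ℤ), fh n * J k n := (Finset.sum_sdiff (hsub k)).symm
      _ = (∑ n ∈ S k \ Finset.Icc (-(k:ℤ)) (k:ℤ), fh n * J k n) + c0 * T k := by
        congr 1
        rw [hTdef, Finset.mul_sum]
        refine Finset.sum_congr rfl fun n hn => ?_
        rw [hJfull k n hn]
        ring
  have hcard : ∀ k : ℕ, ((S k \ Finset.Icc (-(k:ℤ)) (k:ℤ)).card : ℝ) = 4*(N:ℝ)+2 := by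
    intro k
    have h : (S k \ Finset.Icc (-(k:ℤ)) (k:ℤ)).card = 4*N+2 := by
      rw [Finset.card_sdiff_of_subset (hsub k)]
      simp only [hS]
      rw [Int.card_Icc, Int.card_Icc]
      omega
    rw [h]
    push_cast
    ring
  have hu : Tendsto (fun k : ℕ => (2*(k:ℝ)+1)⁻¹ • T k) atTop (𝓝 0) := my_circle_avg ν y (hν _)
  have hlamtop : Tendsto (fun k : ℕ => 2 * lam k) atTop atTop := by
    have h1 : Tendsto (fun k : ℕ => (k:ℝ) + ((N:ℝ)+1)) atTop atTop :=
      tendsto_atTop_add_const_right _ _ tendsto_natCast_atTop_atTop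
    refine (h1.const_mul_atTop (show (0:ℝ) < 2 by norm_num)).congr fun k => ?_
    simp only [hlam]
    ring
  -- limit along the hypothesis side is 0
  have hlim0 : Tendsto A atTop (𝓝 0) := by
    have hbound : ∀ k, ‖A k‖ ≤ (2*lam k)⁻¹ * ((4*(N:ℝ)+2) * (Cν * CΛ))
        + ‖c0‖ * ‖(2*(k:ℝ)+1)⁻¹ • T k‖ := by
      intro k
      have hlk := hlampos k
      rw [hA2 k, norm_smul, Real.norm_eq_abs,
        _root_.abs_of_nonneg (le_of_lt (inv_pos.mpr (by linarith [hlampos k])))]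
      have hE : ‖∑ n ∈ S k \ Finset.Icc (-(k:ℤ)) (k:ℤ), fh n * J k n‖
          ≤ (4*(N:ℝ)+2) * (Cν * CΛ) := by
        calc ‖∑ n ∈ S k \ Finset.Icc (-(k:ℤ)) (k:ℤ), fh n * J k n‖
            ≤ ∑ n ∈ S k \ Finset.Icc (-(k:ℤ)) (k:ℤ), ‖fh n * J k n‖ := norm_sum_le _ _
          _ ≤ ∑ _n ∈ S k \ Finset.Icc (-(k:ℤ)) (k:ℤ), Cν * CΛ :=
            Finset.sum_le_sum fun n _ => by
              rw [norm_mul]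
              exact mul_le_mul (hfhb n) (hJb k n) (norm_nonneg _) hCν0
          _ = ((S k \ Finset.Icc (-(k:ℤ)) (k:ℤ)).card : ℝ) * (Cν * CΛ) := by
            rw [Finset.sum_const, nsmul_eq_mul]
          _ = (4*(N:ℝ)+2) * (Cν * CΛ) := by rw [hcard k]
      have hT2 : ‖c0 * T k‖ = ‖c0‖ * ((2*(k:ℝ)+1) * ‖(2*(k:ℝ)+1)⁻¹ • T k‖) := by
        rw [norm_mul, norm_smul, Real.norm_eq_abs, _root_.abs_of_nonneg (by positivity),
          ← mul_assoc ((2*(k:ℝ)+1)) _ _, mul_inv_cancel₀ (by positivity), one_mul]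
      have hratio : (2*(k:ℝ)+1) ≤ 2 * lam k := by
        simp only [hlam]
        have : (0:ℝ) ≤ (N:ℝ) := Nat.cast_nonneg N
        linarith
      calc (2*lam k)⁻¹ * ‖(∑ n ∈ S k \ Finset.Icc (-(k:ℤ)) (k:ℤ), fh n * J k n) + c0 * T k‖
          ≤ (2*lam k)⁻¹ * (‖∑ n ∈ S k \ Finset.Icc (-(k:ℤ)) (k:ℤ), fh n * J k n‖ + ‖c0 * T k‖) := by
            gcongr
            exact norm_add_le _ _
        _ ≤ (2*lam k)⁻¹ * ((4*(N:ℝ)+2) * (Cν * CΛ)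
            + ‖c0‖ * ((2*(k:ℝ)+1) * ‖(2*(k:ℝ)+1)⁻¹ • T k‖)) := by
            rw [← hT2]
            gcongr
        _ = (2*lam k)⁻¹ * ((4*(N:ℝ)+2) * (Cν * CΛ))
            + ((2*lam k)⁻¹ * (2*(k:ℝ)+1)) * (‖c0‖ * ‖(2*(k:ℝ)+1)⁻¹ • T k‖) := by ring
        _ ≤ (2*lam k)⁻¹ * ((4*(N:ℝ)+2) * (Cν * CΛ))
            + 1 * (‖c0‖ * ‖(2*(k:ℝ)+1)⁻¹ • T k‖) := by
            have hle : (2*lam k)⁻¹ * (2*(k:ℝ)+1) ≤ 1 := by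
              calc (2*lam k)⁻¹ * (2*(k:ℝ)+1) ≤ (2*lam k)⁻¹ * (2*lam k) := by gcongr
                _ = 1 := inv_mul_cancel₀ (ne_of_gt (by linarith [hlampos k] : (0:ℝ) < 2*lam k))
            have hx : 0 ≤ ‖c0‖ * ‖(2*(k:ℝ)+1)⁻¹ • T k‖ :=
              mul_nonneg (norm_nonneg _) (norm_nonneg _)
            nlinarith [mul_le_mul_of_nonneg_right hle hx]
        _ = (2*lam k)⁻¹ * ((4*(N:ℝ)+2) * (Cν * CΛ)) + ‖c0‖ * ‖(2*(k:ℝ)+1)⁻¹ • T k‖ := by ring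
    apply squeeze_zero_norm hbound
    have t1 : Tendsto (fun k : ℕ => (2*lam k)⁻¹ * ((4*(N:ℝ)+2)*(Cν*CΛ))) atTop (𝓝 0) := by
      simpa using (hlamtop.inv_tendsto_atTop).mul_const ((4*(N:ℝ)+2)*(Cν*CΛ))
    have t2 : Tendsto (fun k : ℕ => ‖c0‖ * ‖(2*(k:ℝ)+1)⁻¹ • T k‖) atTop (𝓝 0) := by
      simpa using hu.norm.const_mul ‖c0‖
    simpa using t1.add t2
  -- Wiener side: A tends to μ{y}
  have hGnorm : ∀ (ξ x : ℝ), ‖Complex.exp (2*π*I*ξ*((y - x : ℝ):ℂ))‖ = 1 :=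
    fun ξ x => my_norm_exp' ξ (y - x)
  have hGcont : Continuous (fun p : ℝ × ℝ => Complex.exp (2*π*I*p.1*((y - p.2 : ℝ):ℂ))) := by
    fun_prop
  have hswap : ∀ k : ℕ, (∫ ξ in Set.Ioc (-(lam k)) (lam k),
      ∫ x : ℝ, Complex.exp (2*π*I*ξ*((y - x : ℝ):ℂ)) ∂μ)
      = ∫ x : ℝ, (∫ ξ in Set.Ioc (-(lam k)) (lam k),
        Complex.exp (2*π*I*ξ*((y - x : ℝ):ℂ))) ∂μ := by
    intro k
    haveI := hfin k
    apply integral_integral_swap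
    refine (integrable_const (1:ℝ)).mono' hGcont.aestronglyMeasurable ?_
    filter_upwards with p
    exact le_of_eq (hGnorm p.1 p.2)
  have hinner : ∀ (ξ : ℝ), (∫ x : ℝ, Complex.exp (-(2*π*I*(ξ:ℂ)*(x:ℂ))) ∂μ)
      * Complex.exp (2*π*I*ξ*y)
      = ∫ x : ℝ, Complex.exp (2*π*I*ξ*((y - x : ℝ):ℂ)) ∂μ := by
    intro ξ
    rw [← integral_mul_const (Complex.exp (2*π*I*(ξ:ℂ)*(y:ℂ)))
      (fun x : ℝ => Complex.exp (-(2*π*I*(ξ:ℂ)*(x:ℂ))))]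
    refine integral_congr_ae (.of_forall fun x => ?_)
    beta_reduce
    rw [← Complex.exp_add]
    congr 1
    push_cast
    ring
  set F : ℕ → ℝ → ℂ := fun k x => (2*lam k)⁻¹ •
    ∫ ξ in Set.Ioc (-(lam k)) (lam k), Complex.exp (2*π*I*ξ*((y - x : ℝ):ℂ)) with hF
  have hAF : ∀ k, A k = ∫ x, F k x ∂μ := by
    intro k
    simp only [hA, hF]
    rw [show (∫ ξ in Set.Ioc (-(lam k)) (lam k),
        (∫ x : ℝ, Complex.exp (-(2 * π * I * (ξ:ℂ) * (x:ℂ))) ∂μ) * Complex.exp (2*π*I*ξ*y))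
        = ∫ ξ in Set.Ioc (-(lam k)) (lam k),
          ∫ x : ℝ, Complex.exp (2*π*I*ξ*((y - x : ℝ):ℂ)) ∂μ
      from setIntegral_congr_fun measurableSet_Ioc fun ξ _ => hinner ξ, hswap k,
      ← integral_smul]
  have hvol : ∀ k, (volume (Set.Ioc (-(lam k)) (lam k))).toReal = 2 * lam k := by
    intro k
    rw [Real.volume_Ioc, ENNReal.toReal_ofReal (by linarith [hlampos k])]
    ring
  have hFmeas : ∀ k, AEStronglyMeasurable (F k) μ := by
    intro k
    have hm : StronglyMeasurable (fun x : ℝ => ∫ ξ in Set.Ioc (-(lam k)) (lam k),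
        Complex.exp (2*π*I*ξ*((y - x : ℝ):ℂ))) := by
      apply StronglyMeasurable.integral_prod_right
        (f := fun (x ξ : ℝ) => Complex.exp (2*π*I*ξ*((y - x : ℝ):ℂ)))
      exact (hGcont.comp (continuous_snd.prodMk continuous_fst)).stronglyMeasurable
    exact (hm.aestronglyMeasurable (μ := μ)).const_smul ((2*lam k)⁻¹)
  have hFb : ∀ k x, ‖F k x‖ ≤ 1 := by
    intro k x
    have hlk := hlampos k
    simp only [hF]
    rw [norm_smul, Real.norm_eq_abs, _root_.abs_of_nonneg (le_of_lt (inv_pos.mpr (by linarith [hlampos k])))]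
    have h1 : ‖∫ ξ in Set.Ioc (-(lam k)) (lam k), Complex.exp (2*π*I*ξ*((y - x : ℝ):ℂ))‖
        ≤ 1 * (volume (Set.Ioc (-(lam k)) (lam k))).toReal :=
      norm_setIntegral_le_of_norm_le_const
        (by rw [Real.volume_Ioc]; exact ENNReal.ofReal_lt_top)
        (fun ξ _ => le_of_eq (hGnorm ξ x))
    rw [one_mul, hvol k] at h1
    calc (2*lam k)⁻¹ * ‖∫ ξ in Set.Ioc (-(lam k)) (lam k),
          Complex.exp (2*π*I*ξ*((y - x : ℝ):ℂ))‖
        ≤ (2*lam k)⁻¹ * (2*lam k) := by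
          gcongr
      _ = 1 := inv_mul_cancel₀ (ne_of_gt (by linarith [hlampos k] : (0:ℝ) < 2*lam k))
  have hFlim : ∀ x : ℝ, Tendsto (fun k => F k x) atTop
      (𝓝 (Set.indicator {y} (fun _ => (1:ℂ)) x)) := by
    intro x
    by_cases hx : x = y
    · subst hx
      have hone : ∀ k, F k x = 1 := by
        intro k
        simp only [hF]
        rw [show (fun ξ : ℝ => Complex.exp (2*π*I*ξ*((x - x : ℝ):ℂ)))
            = fun _ : ℝ => (1:ℂ) from funext fun ξ => by simp]
        rw [setIntegral_const, Measure.real, hvol k, smul_smul, inv_mul_cancel₀ (ne_of_gt (by linarith [hlampos k] : (0:ℝ) < 2*lam k)), one_smul]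
      rw [Set.indicator_of_mem (Set.mem_singleton x)]
      simp only [hone]
      exact tendsto_const_nhds
    · rw [Set.indicator_of_notMem (by simpa using hx)]
      set c : ℂ := 2*π*I*((y - x : ℝ):ℂ) with hc
      have hcne : c ≠ 0 := by
        simp only [hc]
        refine mul_ne_zero (mul_ne_zero (mul_ne_zero two_ne_zero ?_) I_ne_zero) ?_
        · exact_mod_cast ofReal_ne_zero.mpr Real.pi_ne_zero
        · exact ofReal_ne_zero.mpr (sub_ne_zero.mpr (Ne.symm hx))
      have heval : ∀ k, (∫ ξ in Set.Ioc (-(lam k)) (lam k),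
          Complex.exp (2*π*I*ξ*((y - x : ℝ):ℂ)))
          = (Complex.exp (c * ((lam k : ℝ):ℂ)) - Complex.exp (c * ((-(lam k) : ℝ):ℂ))) / c := by
        intro k
        rw [← intervalIntegral.integral_of_le (hlamle k)]
        rw [show (fun ξ : ℝ => Complex.exp (2*π*I*ξ*((y - x : ℝ):ℂ)))
            = fun ξ : ℝ => Complex.exp (c * (ξ:ℂ)) from funext fun ξ => by rw [hc]; ring_nf]
        exact integral_exp_mul_complex hcne
      have hnorm : ∀ k, ‖F k x‖ ≤ (2/‖c‖) * (2*lam k)⁻¹ := by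
        intro k
        have hlk := hlampos k
        simp only [hF]
        rw [norm_smul, Real.norm_eq_abs, _root_.abs_of_nonneg (le_of_lt (inv_pos.mpr (by linarith [hlampos k]))),
          heval k]
        have e1 : ‖Complex.exp (c * ((lam k : ℝ):ℂ))‖ = 1 := by
          rw [hc]; exact my_norm_exp' (y-x) (lam k)
        have e2 : ‖Complex.exp (c * ((-(lam k) : ℝ):ℂ))‖ = 1 := by
          rw [hc]; exact my_norm_exp' (y-x) (-(lam k))
        have hd : ‖(Complex.exp (c * ((lam k : ℝ):ℂ))
            - Complex.exp (c * ((-(lam k) : ℝ):ℂ))) / c‖ ≤ 2/‖c‖ := by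
          rw [norm_div]
          gcongr
          calc ‖Complex.exp (c * ((lam k : ℝ):ℂ)) - Complex.exp (c * ((-(lam k) : ℝ):ℂ))‖
              ≤ ‖Complex.exp (c * ((lam k : ℝ):ℂ))‖
                + ‖Complex.exp (c * ((-(lam k) : ℝ):ℂ))‖ := norm_sub_le _ _
            _ = 2 := by rw [e1, e2]; norm_num
        calc (2*lam k)⁻¹ * ‖(Complex.exp (c * ((lam k : ℝ):ℂ))
              - Complex.exp (c * ((-(lam k) : ℝ):ℂ))) / c‖
            ≤ (2*lam k)⁻¹ * (2/‖c‖) := by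
              gcongr
          _ = (2/‖c‖) * (2*lam k)⁻¹ := by ring
      apply squeeze_zero_norm hnorm
      simpa using (hlamtop.inv_tendsto_atTop).const_mul (2/‖c‖)
  have hDCT := tendsto_integral_of_dominated_convergence (μ := μ) (bound := fun _ => (1:ℝ))
    hFmeas (integrable_const 1) (fun k => .of_forall (hFb k)) (.of_forall hFlim)
  have hind : (∫ x, Set.indicator {y} (fun _ => (1:ℂ)) x ∂μ) = ((μ {y}).toReal : ℂ) := by
    rw [integral_indicator (measurableSet_singleton y), setIntegral_const]
    simp [Complex.real_smul, Measure.real]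
  rw [hind] at hDCT
  have hlimmu : Tendsto A atTop (𝓝 (((μ {y}).toReal : ℝ) : ℂ)) :=
    hDCT.congr fun k => (hAF k).symm
  have hzero := tendsto_nhds_unique hlimmu hlim0
  rw [Complex.ofReal_eq_zero] at hzero
  exact ((ENNReal.toReal_eq_zero_iff _).mp hzero).resolve_right (measure_ne_top μ _)

end
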